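/- Let G = AB be a finite group which is the product of subgroups A and B such that ⟨a, b⟩ is nilpotent for all a ∈ A and b ∈ B. Then A ∩ B is contained in the hypercenter of G. -/

import Mathlib

section st10_aux
open Subgroup
open scoped commutatorElement

lemma st10_ppart {G : Type*} [Group G] [Finite G] (p : ℕ) (hp : p.Prime) (g : G) :
    ∃ y z : G, g = y * z ∧ y * z = z * y ∧ y ∈ Subgroup.zpowers g ∧ z ∈ Subgroup.zpowers g ∧
      y ^ p ^ ((orderOf g).factorization p) = 1 ∧ ¬ p ∣ orderOf z ∧
      (p ∣ orderOf g → orderOf z < orderOf g) := by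
  set n := orderOf g with hn0
  have hn : n ≠ 0 := (orderOf_pos g).ne'
  set k := n.factorization p with hk0
  set pk := p ^ k with hpk0
  set m := ordCompl[p] n with hm0
  have hnm : pk * m = n := Nat.ordProj_mul_ordCompl_eq_self n p
  have hcop : Nat.Coprime pk m := Nat.Coprime.pow_left k (Nat.coprime_ordCompl hp hn)
  have hbez : (1 : ℤ) = pk * Nat.gcdA pk m + m * Nat.gcdB pk m := by
    have := Nat.gcd_eq_gcd_ab pk m
    rwa [Nat.Coprime.gcd_eq_one hcop] at this
  refine ⟨g ^ ((m : ℤ) * Nat.gcdB pk m), g ^ ((pk : ℤ) * Nat.gcdA pk m), ?_, ?_, ?_, ?_, ?_, ?_, ?_⟩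
  · rw [← zpow_add, ← zpow_one g]
    congr 1
    rw [zpow_one]
    omega
  · rw [← zpow_add, ← zpow_add]; ring_nf
  · exact ⟨_, rfl⟩
  · exact ⟨_, rfl⟩
  · rw [← zpow_natCast, ← zpow_mul]
    have : (m : ℤ) * Nat.gcdB pk m * pk = n * Nat.gcdB pk m := by
      push_cast [← hnm]; ring
    rw [this, zpow_mul, zpow_natCast, pow_orderOf_eq_one, one_zpow]
  · have hdvd : orderOf (g ^ ((pk : ℤ) * Nat.gcdA pk m)) ∣ m := by
      apply orderOf_dvd_of_pow_eq_one
      rw [← zpow_natCast, ← zpow_mul]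
      have : (pk : ℤ) * Nat.gcdA pk m * m = n * Nat.gcdA pk m := by
        push_cast [← hnm]; ring
      rw [this, zpow_mul, zpow_natCast, pow_orderOf_eq_one, one_zpow]
    exact fun hpd => Nat.not_dvd_ordCompl hp hn (hpd.trans hdvd)
  · intro hpn
    have hdvd : orderOf (g ^ ((pk : ℤ) * Nat.gcdA pk m)) ∣ m := by
      apply orderOf_dvd_of_pow_eq_one
      rw [← zpow_natCast, ← zpow_mul]
      have : (pk : ℤ) * Nat.gcdA pk m * m = n * Nat.gcdA pk m := by
        push_cast [← hnm]; ring
      rw [this, zpow_mul, zpow_natCast, pow_orderOf_eq_one, one_zpow]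
    have hm_pos : 0 < m := Nat.ordCompl_pos p hn
    have hk_pos : 0 < k := hp.factorization_pos_of_dvd hn hpn
    have : m < n := by
      rw [hm0]
      exact Nat.div_lt_self (Nat.pos_of_ne_zero hn) (Nat.one_lt_pow hk_pos.ne' hp.one_lt)
    exact lt_of_le_of_lt (Nat.le_of_dvd hm_pos hdvd) this


lemma st10_unipotent {G : Type*} [Group G] [Finite G] (P : Subgroup G)
    (hPnil : Group.IsNilpotent ↥P) :
    ∀ n : ℕ, ∀ N : Subgroup G, N.Normal → N ≤ P →
      (∀ g : G, ∃ c ∈ Subgroup.centralizer (N : Set G), ∃ u ∈ P, g = c * u) →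
      Nat.card N ≤ n → N ≤ Subgroup.upperCentralSeries G n := by
  intro n
  induction n with
  | zero =>
    intro N _ _ _ hcard
    have := Nat.card_pos (α := ↥N)
    omega
  | succ n ih =>
    intro N hN hNP hdec hcard
    haveI := hN
    by_cases hbot : N = ⊥
    · rw [hbot]; exact bot_le
    set N' := ⁅N, (⊤ : Subgroup G)⁆ with hN'def
    have hN'N : N' ≤ N := Subgroup.commutator_le_left N ⊤
    haveI hN'normal : N'.Normal := Subgroup.commutator_normal N ⊤
    have hcent : Subgroup.centralizer (N : Set G) ≤ Subgroup.centralizer (N' : Set G) :=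
      Subgroup.centralizer_le hN'N
    have key : N' ≤ ⁅N, P⁆ := by
      rw [hN'def, Subgroup.commutator_le]
      intro n1 hn1 g _
      obtain ⟨c, hc, u, hu, rfl⟩ := hdec g
      have hw : u * n1⁻¹ * u⁻¹ ∈ N := hN.conj_mem _ (N.inv_mem hn1) u
      have hcw : c * (u * n1⁻¹ * u⁻¹) * c⁻¹ = u * n1⁻¹ * u⁻¹ := by
        rw [← Subgroup.mem_centralizer_iff.mp hc _ hw]; group
      have h1 : ⁅n1, c * u⁆ = ⁅n1, u⁆ := by
        have e1 : ⁅n1, c * u⁆ = n1 * (c * (u * n1⁻¹ * u⁻¹) * c⁻¹) := by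
          rw [commutatorElement_def]; group
        rw [e1, hcw, commutatorElement_def]; group
      rw [h1]
      exact Subgroup.commutator_mem_commutator hn1 hu
    have hlt : N' < N := by
      refine lt_of_le_of_ne hN'N ?_
      intro heq
      have hchain : ∀ i, N ≤ Subgroup.map P.subtype (Subgroup.lowerCentralSeries (⊤ : Subgroup ↥P) i) := by
        intro i
        induction i with
        | zero =>
          rw [Subgroup.lowerCentralSeries_zero, ← MonoidHom.range_eq_map, Subgroup.range_subtype]
          exact hNP
        | succ i ihc =>
          calc N = N' := heq.symm
            _ ≤ ⁅N, P⁆ := key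
            _ ≤ ⁅Subgroup.map P.subtype (Subgroup.lowerCentralSeries (⊤ : Subgroup ↥P) i),
                  Subgroup.map P.subtype ⊤⁆ := by
                refine Subgroup.commutator_mono ihc ?_
                rw [← MonoidHom.range_eq_map, Subgroup.range_subtype]
            _ = Subgroup.map P.subtype ⁅Subgroup.lowerCentralSeries (⊤ : Subgroup ↥P) i, ⊤⁆ :=
                (Subgroup.map_commutator _ _ _).symm
            _ = Subgroup.map P.subtype (Subgroup.lowerCentralSeries (⊤ : Subgroup ↥P) (i + 1)) := rfl
      obtain ⟨i0, hi0⟩ := Subgroup.nilpotent_iff_lowerCentralSeries.mp hPnil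
      have h2 := hchain i0
      rw [hi0] at h2
      simp only [Subgroup.map_bot, le_bot_iff] at h2
      exact hbot h2
    have hcardlt : Nat.card N' < Nat.card N := by
      refine lt_of_le_of_ne (Subgroup.card_le_of_le hlt.le) ?_
      intro heq
      exact hlt.ne (Subgroup.eq_of_le_of_card_ge hlt.le heq.ge)
    have ihN' : N' ≤ Subgroup.upperCentralSeries G n :=
      ih N' hN'normal (hN'N.trans hNP)
        (fun g => by
          obtain ⟨c, hc, u, hu, rfl⟩ := hdec g
          exact ⟨c, hcent hc, u, hu, rfl⟩)
        (by omega)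
    intro x hx
    rw [Subgroup.mem_upperCentralSeries_succ_iff]
    intro y
    have : x * y * x⁻¹ * y⁻¹ = ⁅x, y⁆ := (commutatorElement_def x y).symm
    exact ihN' (Subgroup.commutator_mem_commutator hx (Subgroup.mem_top y))


lemma st10_pelem_mem_sylow {H : Type*} [Group H] [Finite H] {q : ℕ} (hq : q.Prime)
    (Q : Sylow q H) (hQ : (Q : Subgroup H).Normal) {y : H} {i : ℕ} (hy : y ^ q ^ i = 1) :
    y ∈ (Q : Subgroup H) := by
  haveI : Fact q.Prime := ⟨hq⟩
  have hord : orderOf y ∣ q ^ i := orderOf_dvd_of_pow_eq_one hy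
  obtain ⟨j, _, hjy⟩ := (Nat.dvd_prime_pow hq).mp hord
  have hsub : IsPGroup q (Subgroup.zpowers y) := by
    rw [IsPGroup.iff_card]
    exact ⟨j, by rw [Nat.card_zpowers, hjy]⟩
  obtain ⟨R, hR⟩ := hsub.exists_le_sylow
  haveI := Sylow.unique_of_normal Q hQ
  have : R = Q := Subsingleton.elim R Q
  exact this ▸ hR (Subgroup.mem_zpowers y)

lemma st10_commute_of_prime_pow {G : Type*} [Group G] [Finite G] {a b : G} {q r : ℕ}
    (hq : q.Prime) (hr : r.Prime) (hqr : q ≠ r) {i j : ℕ}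
    (ha : a ^ q ^ i = 1) (hb : b ^ r ^ j = 1)
    (hnil : Group.IsNilpotent (Subgroup.closure {a, b})) : Commute a b := by
  set H := Subgroup.closure ({a, b} : Set G) with hH
  have haH : a ∈ H := Subgroup.subset_closure (by simp)
  have hbH : b ∈ H := Subgroup.subset_closure (by simp)
  haveI : Fact q.Prime := ⟨hq⟩
  haveI : Fact r.Prime := ⟨hr⟩
  obtain ⟨Q⟩ : Nonempty (Sylow q ↥H) := inferInstance
  obtain ⟨R⟩ : Nonempty (Sylow r ↥H) := inferInstance
  have hnormal := ((isNilpotent_of_finite_tfae (G := ↥H)).out 0 3).mp hnil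
  have hQn : (Q : Subgroup ↥H).Normal := hnormal q ⟨hq⟩ Q
  have hRn : (R : Subgroup ↥H).Normal := hnormal r ⟨hr⟩ R
  have ha' : (⟨a, haH⟩ : ↥H) ^ q ^ i = 1 := by
    ext
    simpa using ha
  have hb' : (⟨b, hbH⟩ : ↥H) ^ r ^ j = 1 := by
    ext
    simpa using hb
  have haQ := st10_pelem_mem_sylow hq Q hQn ha'
  have hbR := st10_pelem_mem_sylow hr R hRn hb'
  have hdisj : Disjoint (Q : Subgroup ↥H) (R : Subgroup ↥H) := by
    rw [Subgroup.disjoint_def]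
    intro c hcQ hcR
    obtain ⟨s, hs⟩ := Q.isPGroup' ⟨c, hcQ⟩
    obtain ⟨t, ht⟩ := R.isPGroup' ⟨c, hcR⟩
    have hs' : c ^ q ^ s = 1 := by
      have := congrArg (Subtype.val) hs
      simpa using this
    have ht' : c ^ r ^ t = 1 := by
      have := congrArg (Subtype.val) ht
      simpa using this
    have h1 : orderOf c ∣ q ^ s := orderOf_dvd_of_pow_eq_one hs'
    have h2 : orderOf c ∣ r ^ t := orderOf_dvd_of_pow_eq_one ht'
    have hcop : Nat.Coprime (q ^ s) (r ^ t) :=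
      (((Nat.coprime_primes hq hr).mpr hqr).pow s t)
    have : orderOf c = 1 := Nat.eq_one_of_dvd_coprimes hcop h1 h2
    exact orderOf_eq_one_iff.mp this
  have hcomm := Subgroup.commute_of_normal_of_disjoint _ _ hQn hRn hdisj
    ⟨a, haH⟩ ⟨b, hbH⟩ haQ hbR
  have := congrArg (Subtype.val) hcomm
  simpa [Commute, SemiconjBy] using this


/-- closure of two p-elements, if nilpotent, consists of p-elements -/
lemma st10_ppow_closure {G : Type*} [Group G] [Finite G] {a b : G} {p : ℕ} (hp : p.Prime)
    {i j : ℕ} (ha : a ^ p ^ i = 1) (hb : b ^ p ^ j = 1)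
    (hnil : Group.IsNilpotent (Subgroup.closure {a, b})) :
    ∀ g ∈ Subgroup.closure ({a, b} : Set G), ∃ k, g ^ p ^ k = 1 := by
  set H := Subgroup.closure ({a, b} : Set G) with hH
  have haH : a ∈ H := Subgroup.subset_closure (by simp)
  have hbH : b ∈ H := Subgroup.subset_closure (by simp)
  haveI : Fact p.Prime := ⟨hp⟩
  obtain ⟨Q⟩ : Nonempty (Sylow p ↥H) := inferInstance
  have hnormal := ((isNilpotent_of_finite_tfae (G := ↥H)).out 0 3).mp hnil
  have hQn : (Q : Subgroup ↥H).Normal := hnormal p ⟨hp⟩ Q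
  have ha' : (⟨a, haH⟩ : ↥H) ^ p ^ i = 1 := by ext; simpa using ha
  have hb' : (⟨b, hbH⟩ : ↥H) ^ p ^ j = 1 := by ext; simpa using hb
  have haQ := st10_pelem_mem_sylow hp Q hQn ha'
  have hbQ := st10_pelem_mem_sylow hp Q hQn hb'
  have hle : H ≤ Subgroup.map H.subtype (Q : Subgroup ↥H) := by
    apply (Subgroup.closure_le _).mpr
    rintro x hx
    rcases hx with rfl | hx
    · exact ⟨_, haQ, rfl⟩
    · rcases hx with rfl
      exact ⟨_, hbQ, rfl⟩
  intro g hg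
  obtain ⟨x, hxQ, hx⟩ := hle hg
  have hmem : (⟨g, hg⟩ : ↥H) ∈ (Q : Subgroup ↥H) := by
    have : x = (⟨g, hg⟩ : ↥H) := Subtype.ext hx
    rwa [this] at hxQ
  obtain ⟨k, hk⟩ := Q.isPGroup' ⟨⟨g, hg⟩, hmem⟩
  refine ⟨k, ?_⟩
  have h1 := congrArg Subtype.val hk
  have h2 := congrArg Subtype.val h1
  simpa using h2

section conn
variable {G : Type*} [Group G] [Finite G] (A B : Subgroup G)
variable (hconn : ∀ a ∈ A, ∀ b ∈ B, Group.IsNilpotent (Subgroup.closure {a, b}))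

include hconn

lemma st10_cc1 : ∀ n : ℕ, ∀ b ∈ B, orderOf b ≤ n → ∀ a ∈ A, ∀ q i : ℕ, q.Prime →
    a ^ q ^ i = 1 → ¬ q ∣ orderOf b → Commute a b := by
  intro n
  induction n with
  | zero => intro b _ hb0; exact absurd hb0 (by have := orderOf_pos b; omega)
  | succ n ih =>
    intro b hbB hble a haA q i hq hapow hqb
    by_cases h1 : orderOf b = 1
    · rw [orderOf_eq_one_iff.mp h1]; exact Commute.one_right a
    obtain ⟨r, hr, hrb⟩ := Nat.exists_prime_and_dvd h1
    have hrq : q ≠ r := fun h => hqb (h ▸ hrb)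
    obtain ⟨y, z, hbyz, _, hyP, hzP, hypow, hrz, hzlt⟩ := st10_ppart r hr b
    have hyB : y ∈ B := (Subgroup.zpowers_le.mpr hbB) hyP
    have hzB : z ∈ B := (Subgroup.zpowers_le.mpr hbB) hzP
    have hay : Commute a y :=
      st10_commute_of_prime_pow hq hr hrq hapow hypow (hconn a haA y hyB)
    have haz : Commute a z := by
      refine ih z hzB ?_ a haA q i hq hapow ?_
      · have := hzlt hrb; omega
      · exact fun hdvd => hqb (hdvd.trans (orderOf_dvd_of_mem_zpowers hzP))
    rw [hbyz]
    exact hay.mul_right haz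

lemma st10_cc : ∀ a ∈ A, ∀ b ∈ B, Nat.Coprime (orderOf a) (orderOf b) → Commute a b := by
  suffices h : ∀ n : ℕ, ∀ a ∈ A, orderOf a ≤ n → ∀ b ∈ B,
      Nat.Coprime (orderOf a) (orderOf b) → Commute a b by
    intro a ha b hb hcop
    exact h (orderOf a) a ha le_rfl b hb hcop
  intro n
  induction n with
  | zero => intro a _ ha0; exact absurd ha0 (by have := orderOf_pos a; omega)
  | succ n ih =>
    intro a haA hale b hbB hcop
    by_cases h1 : orderOf a = 1
    · rw [orderOf_eq_one_iff.mp h1]; exact Commute.one_left b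
    obtain ⟨q, hq, hqa⟩ := Nat.exists_prime_and_dvd h1
    obtain ⟨y, z, hayz, _, hyP, hzP, hypow, hqz, hzlt⟩ := st10_ppart q hq a
    have hyA : y ∈ A := (Subgroup.zpowers_le.mpr haA) hyP
    have hzA : z ∈ A := (Subgroup.zpowers_le.mpr haA) hzP
    have hqb : ¬ q ∣ orderOf b := by
      have hcq : Nat.Coprime q (orderOf b) := Nat.Coprime.coprime_dvd_left hqa hcop
      exact (Nat.Prime.coprime_iff_not_dvd hq).mp hcq
    have hyb : Commute y b :=
      st10_cc1 A B hconn (orderOf b) b hbB le_rfl y hyA q _ hq hypow hqb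
    have hzb : Commute z b := by
      refine ih z hzA ?_ b hbB ?_
      · have := hzlt hqa; omega
      · exact Nat.Coprime.coprime_dvd_left (orderOf_dvd_of_mem_zpowers hzP) hcop
    rw [hayz]
    exact hyb.mul_left hzb

end conn


section main
variable {G : Type*} [Group G] [Finite G] (A B : Subgroup G)

lemma st10_main (hG : ∀ g : G, ∃ a ∈ A, ∃ b ∈ B, g = a * b)
    (hconn : ∀ a ∈ A, ∀ b ∈ B, Group.IsNilpotent (Subgroup.closure {a, b}))
    {p : ℕ} (hp : p.Prime) {x : G} (hxA : x ∈ A) (hxB : x ∈ B)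
    {k : ℕ} (hxpow : x ^ p ^ k = 1) :
    x ∈ Subgroup.upperCentralSeries G (Nat.card G) := by
  haveI : Fact p.Prime := ⟨hp⟩
  classical
  set S : Set G := {g | (g ∈ A ∨ g ∈ B) ∧ ¬ p ∣ orderOf g} with hS
  set D := Subgroup.closure S with hD
  -- elements of S commute with x
  have hordx : orderOf x ∣ p ^ k := orderOf_dvd_of_pow_eq_one hxpow
  have hScop : ∀ s : G, ¬ p ∣ orderOf s → Nat.Coprime (orderOf s) (orderOf x) := by
    intro s hns
    have h1 : Nat.Coprime (orderOf s) p :=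
      ((Nat.Prime.coprime_iff_not_dvd hp).mpr hns).symm
    exact Nat.Coprime.coprime_dvd_right hordx (h1.pow_right k)
  have hSx : ∀ s ∈ S, Commute s x := by
    rintro s ⟨hsAB | hsAB, hns⟩
    · exact st10_cc A B hconn s hsAB x hxB (hScop s hns)
    · exact (st10_cc A B hconn x hxA s hsAB ((hScop s hns).symm)).symm
  have hDcent : D ≤ Subgroup.centralizer {x} := by
    apply (Subgroup.closure_le _).mpr
    intro s hs
    rw [SetLike.mem_coe, Subgroup.mem_centralizer_iff]
    intro h hh
    rw [Set.mem_singleton_iff] at hh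
    subst hh
    exact ((hSx s hs).symm).eq
  have hDxconj : ∀ d ∈ D, d * x * d⁻¹ = x := by
    intro d hd
    have h := Subgroup.mem_centralizer_iff.mp (hDcent hd) x rfl
    rw [← h]
    group
  -- S is stable (up to D) under conjugation by A and by B
  have horder_conj : ∀ g s : G, orderOf (g * s * g⁻¹) = orderOf s := by
    intro g s
    have := orderOf_injective (MulAut.conj g).toMonoidHom
      (MulEquiv.injective _) s
    simpa [MulAut.conj_apply] using this
  have hstepA : ∀ a ∈ A, ∀ s ∈ S, a * s * a⁻¹ ∈ D := by
    rintro a ha s ⟨hsAB | hsAB, hns⟩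
    · apply Subgroup.subset_closure
      refine ⟨Or.inl (A.mul_mem (A.mul_mem ha hsAB) (A.inv_mem ha)), ?_⟩
      rw [horder_conj]; exact hns
    · obtain ⟨y, z, hayz, hcomm, hyP, hzP, hypow, hpz, -⟩ := st10_ppart p hp a
      have hyA : y ∈ A := (Subgroup.zpowers_le.mpr ha) hyP
      have hzA : z ∈ A := (Subgroup.zpowers_le.mpr ha) hzP
      have hys : Commute y s := by
        refine st10_cc A B hconn y hyA s hsAB ?_
        have h1 : Nat.Coprime p (orderOf s) := (Nat.Prime.coprime_iff_not_dvd hp).mpr hns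
        exact Nat.Coprime.coprime_dvd_left (orderOf_dvd_of_pow_eq_one hypow) (h1.pow_left _)
      have hsD : s ∈ D := Subgroup.subset_closure ⟨Or.inr hsAB, hns⟩
      have hzD : z ∈ D := Subgroup.subset_closure ⟨Or.inl hzA, hpz⟩
      have hconjeq : a * s * a⁻¹ = z * s * z⁻¹ := by
        rw [hayz, hcomm]
        have hyxy : y * s * y⁻¹ = s := by
          rw [hys.eq]; group
        calc z * y * s * (z * y)⁻¹ = z * (y * s * y⁻¹) * z⁻¹ := by group
          _ = z * s * z⁻¹ := by rw [hyxy]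
      rw [hconjeq]
      exact D.mul_mem (D.mul_mem hzD hsD) (D.inv_mem hzD)
  have hstepB : ∀ b ∈ B, ∀ s ∈ S, b * s * b⁻¹ ∈ D := by
    rintro b hb s ⟨hsAB | hsAB, hns⟩
    · obtain ⟨y, z, hbyz, hcomm, hyP, hzP, hypow, hpz, -⟩ := st10_ppart p hp b
      have hyB : y ∈ B := (Subgroup.zpowers_le.mpr hb) hyP
      have hzB : z ∈ B := (Subgroup.zpowers_le.mpr hb) hzP
      have hys : Commute s y := by
        refine st10_cc A B hconn s hsAB y hyB ?_
        have h1 : Nat.Coprime p (orderOf s) := (Nat.Prime.coprime_iff_not_dvd hp).mpr hns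
        exact (Nat.Coprime.coprime_dvd_left (orderOf_dvd_of_pow_eq_one hypow) (h1.pow_left _)).symm
      have hsD : s ∈ D := Subgroup.subset_closure ⟨Or.inl hsAB, hns⟩
      have hzD : z ∈ D := Subgroup.subset_closure ⟨Or.inr hzB, hpz⟩
      have hconjeq : b * s * b⁻¹ = z * s * z⁻¹ := by
        rw [hbyz, hcomm]
        have hyxy : y * s * y⁻¹ = s := by
          rw [hys.symm.eq]; group
        calc z * y * s * (z * y)⁻¹ = z * (y * s * y⁻¹) * z⁻¹ := by group
          _ = z * s * z⁻¹ := by rw [hyxy]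
      rw [hconjeq]
      exact D.mul_mem (D.mul_mem hzD hsD) (D.inv_mem hzD)
    · apply Subgroup.subset_closure
      refine ⟨Or.inr (B.mul_mem (B.mul_mem hb hsAB) (B.inv_mem hb)), ?_⟩
      rw [horder_conj]; exact hns
  have hmapA : ∀ a ∈ A, ∀ d ∈ D, a * d * a⁻¹ ∈ D := by
    intro a ha d hd
    have hmap : Subgroup.map (MulAut.conj a).toMonoidHom D ≤ D := by
      rw [hD, MonoidHom.map_closure]
      apply (Subgroup.closure_le _).mpr
      rintro _ ⟨s, hs, rfl⟩
      simpa [MulAut.conj_apply] using hstepA a ha s hs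
    have : a * d * a⁻¹ = (MulAut.conj a).toMonoidHom d := by simp [MulAut.conj_apply]
    rw [this]
    exact hmap ⟨d, hd, rfl⟩
  have hmapB : ∀ b ∈ B, ∀ d ∈ D, b * d * b⁻¹ ∈ D := by
    intro b hb d hd
    have hmap : Subgroup.map (MulAut.conj b).toMonoidHom D ≤ D := by
      rw [hD, MonoidHom.map_closure]
      apply (Subgroup.closure_le _).mpr
      rintro _ ⟨s, hs, rfl⟩
      simpa [MulAut.conj_apply] using hstepB b hb s hs
    have : b * d * b⁻¹ = (MulAut.conj b).toMonoidHom d := by simp [MulAut.conj_apply]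
    rw [this]
    exact hmap ⟨d, hd, rfl⟩
  haveI hDn : D.Normal := by
    constructor
    intro d hd g
    obtain ⟨a, ha, b, hb, rfl⟩ := hG g
    have h1 : b * d * b⁻¹ ∈ D := hmapB b hb d hd
    have h2 : a * (b * d * b⁻¹) * a⁻¹ ∈ D := hmapA a ha _ h1
    have : a * b * d * (a * b)⁻¹ = a * (b * d * b⁻¹) * a⁻¹ := by group
    rwa [this]
  -- the quotient G / D is a p-group
  have hquot : IsPGroup p (G ⧸ D) := by
    intro gbar
    obtain ⟨g, rfl⟩ := QuotientGroup.mk_surjective gbar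
    obtain ⟨a, ha, b, hb, rfl⟩ := hG g
    obtain ⟨ya, za, haeq, -, hyPa, hzPa, hypowa, hpza, -⟩ := st10_ppart p hp a
    obtain ⟨yb, zb, hbeq, -, hyPb, hzPb, hypowb, hpzb, -⟩ := st10_ppart p hp b
    have hyaA : ya ∈ A := (Subgroup.zpowers_le.mpr ha) hyPa
    have hzaA : za ∈ A := (Subgroup.zpowers_le.mpr ha) hzPa
    have hybB : yb ∈ B := (Subgroup.zpowers_le.mpr hb) hyPb
    have hzbB : zb ∈ B := (Subgroup.zpowers_le.mpr hb) hzPb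
    have hzaD : za ∈ D := Subgroup.subset_closure ⟨Or.inl hzaA, hpza⟩
    have hzbD : zb ∈ D := Subgroup.subset_closure ⟨Or.inr hzbB, hpzb⟩
    obtain ⟨k', hk'⟩ := st10_ppow_closure hp hypowa hypowb (hconn ya hyaA yb hybB)
      (ya * yb) (Subgroup.mul_mem _ (Subgroup.subset_closure (by simp))
        (Subgroup.subset_closure (by simp)))
    refine ⟨k', ?_⟩
    have hza1 : ((za : G) : G ⧸ D) = 1 := (QuotientGroup.eq_one_iff za).mpr hzaD
    have hzb1 : ((zb : G) : G ⧸ D) = 1 := (QuotientGroup.eq_one_iff zb).mpr hzbD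
    have heq : ((a * b : G) : G ⧸ D) = ((ya * yb : G) : G ⧸ D) := by
      rw [haeq, hbeq]
      simp only [QuotientGroup.mk_mul, hza1, hzb1, mul_one, one_mul]
    rw [heq, ← QuotientGroup.mk_pow, hk', QuotientGroup.mk_one]
  -- a Sylow p-subgroup containing x
  have hX : IsPGroup p (Subgroup.zpowers x) := by
    rw [IsPGroup.iff_card]
    obtain ⟨j, -, hj⟩ := (Nat.dvd_prime_pow hp).mp hordx
    exact ⟨j, by rw [Nat.card_zpowers, hj]⟩
  obtain ⟨P, hXP⟩ := hX.exists_le_sylow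
  have hxP : x ∈ (P : Subgroup G) := hXP (Subgroup.mem_zpowers x)
  -- G = D * P
  have hDP : D ⊔ (P : Subgroup G) = ⊤ := by
    have h1 : (D ⊔ (P : Subgroup G)).index ∣ D.index := Subgroup.index_dvd_of_le le_sup_left
    have h2 : (D ⊔ (P : Subgroup G)).index ∣ (P : Subgroup G).index :=
      Subgroup.index_dvd_of_le le_sup_right
    obtain ⟨m, hm⟩ := IsPGroup.iff_card.mp hquot
    have hDidx : D.index = p ^ m := by rw [Subgroup.index_eq_card]; exact hm
    rw [hDidx] at h1
    obtain ⟨i, -, hi⟩ := (Nat.dvd_prime_pow hp).mp h1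
    have hnd := P.not_dvd_index
    rcases Nat.eq_zero_or_pos i with hi0 | hi0
    · rw [← Subgroup.index_eq_one, hi, hi0, pow_zero]
    · exfalso
      apply hnd
      calc p ∣ p ^ i := dvd_pow_self p hi0.ne'
        _ = (D ⊔ (P : Subgroup G)).index := hi.symm
        _ ∣ (P : Subgroup G).index := h2
  have hmul : ∀ g : G, ∃ d ∈ D, ∃ u ∈ (P : Subgroup G), g = d * u := by
    intro g
    have hg2 : g ∈ (↑(D ⊔ (P : Subgroup G)) : Set G) := by rw [hDP]; trivial
    rw [Subgroup.normal_mul] at hg2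
    obtain ⟨d, hd, u, hu, rfl⟩ := hg2
    exact ⟨d, hd, u, hu, rfl⟩
  -- the normal closure N of x
  set N := Subgroup.normalClosure ({x} : Set G) with hN
  haveI hNnormal : N.Normal := Subgroup.normalClosure_normal
  have hxN : x ∈ N := Subgroup.subset_normalClosure rfl
  have hconjmem : ∀ c ∈ Group.conjugatesOfSet ({x} : Set G),
      c ∈ (P : Subgroup G) ⊓ Subgroup.centralizer (D : Set G) := by
    intro c hc
    obtain ⟨a', ha', hconj⟩ := Group.mem_conjugatesOfSet_iff.mp hc
    rw [Set.mem_singleton_iff] at ha'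
    rw [ha'] at hconj
    obtain ⟨g, hg⟩ := isConj_iff.mp hconj
    obtain ⟨d, hd, u, hu, rfl⟩ := hmul g
    have hkey : c = u * x * u⁻¹ := by
      have h3 : (u⁻¹ * d * u) * x * (u⁻¹ * d * u)⁻¹ = x :=
        hDxconj _ (hDn.conj_mem' d hd u)
      have h4 : d * u * x * (d * u)⁻¹ = u * ((u⁻¹ * d * u) * x * (u⁻¹ * d * u)⁻¹) * u⁻¹ := by
        group
      rw [h3] at h4
      rw [← hg, h4]
    rw [Subgroup.mem_inf]
    constructor
    · rw [hkey]
      exact P.1.mul_mem (P.1.mul_mem hu hxP) (P.1.inv_mem hu)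
    · rw [Subgroup.mem_centralizer_iff]
      intro h hh
      have h5 : (h⁻¹ * (d * u) : G) * x * (h⁻¹ * (d * u))⁻¹ = h⁻¹ * c * h := by
        rw [← hg]; group
      -- h⁻¹ * c * h = c since conjugating x by h⁻¹ g also lands via D-decomposition
      -- simpler: show h * c * h⁻¹ = c
      have h6 : ∀ w ∈ D, w * c * w⁻¹ = c := by
        intro w hw
        have h7 : (u⁻¹ * w * u) * x * (u⁻¹ * w * u)⁻¹ = x :=
          hDxconj _ (hDn.conj_mem' w hw u)
        have h8 : w * c * w⁻¹ = u * ((u⁻¹ * w * u) * x * (u⁻¹ * w * u)⁻¹) * u⁻¹ := by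
          rw [hkey]; group
        rw [h7] at h8
        rw [h8, ← hkey]
      have := h6 h hh
      calc h * c = (h * c * h⁻¹) * h := by group
        _ = c * h := by rw [this]
  have hNle : N ≤ (P : Subgroup G) ⊓ Subgroup.centralizer (D : Set G) := by
    have : N = Subgroup.closure (Group.conjugatesOfSet ({x} : Set G)) := rfl
    rw [this]
    exact (Subgroup.closure_le _).mpr hconjmem
  have hNP : N ≤ (P : Subgroup G) := hNle.trans inf_le_left
  have hdec : ∀ g : G, ∃ c ∈ Subgroup.centralizer (N : Set G), ∃ u ∈ (P : Subgroup G),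
      g = c * u := by
    intro g
    obtain ⟨d, hd, u, hu, rfl⟩ := hmul g
    refine ⟨d, ?_, u, hu, rfl⟩
    rw [Subgroup.mem_centralizer_iff]
    intro h hh
    have := Subgroup.mem_centralizer_iff.mp ((hNle hh).2) d hd
    exact this.symm
  have hPnil : Group.IsNilpotent ↥(P : Subgroup G) := P.isPGroup'.isNilpotent
  have hNZ : N ≤ Subgroup.upperCentralSeries G (Nat.card N) :=
    st10_unipotent (P : Subgroup G) hPnil (Nat.card N) N hNnormal hNP hdec le_rfl
  have hcard : Nat.card N ≤ Nat.card G := Subgroup.card_le_card_group N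
  exact Subgroup.upperCentralSeries_mono G hcard (hNZ hxN)

end main

end st10_aux


theorem stmt_10 {G : Type*} [Group G] [Finite G] (A B : Subgroup G)
    (hG : ∀ g : G, ∃ a ∈ A, ∃ b ∈ B, g = a * b)
    (hconn : ∀ a ∈ A, ∀ b ∈ B, Group.IsNilpotent (Subgroup.closure {a, b})) :
    A ⊓ B ≤ upperCentralSeries G (Nat.card G) := by
  intro x hx
  rw [Subgroup.mem_inf] at hx
  obtain ⟨hxA, hxB⟩ := hx
  suffices h : ∀ n : ℕ, ∀ w : G, w ∈ A → w ∈ B → orderOf w ≤ n →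
      w ∈ upperCentralSeries G (Nat.card G) by
    exact h (orderOf x) x hxA hxB le_rfl
  intro n
  induction n with
  | zero =>
    intro w _ _ h0
    exact absurd h0 (by have := orderOf_pos w; omega)
  | succ n ih =>
    intro w hwA hwB hle
    by_cases h1 : orderOf w = 1
    · rw [orderOf_eq_one_iff.mp h1]
      exact Subgroup.one_mem _
    obtain ⟨q, hq, hqw⟩ := Nat.exists_prime_and_dvd h1
    obtain ⟨y, z, hwyz, -, hyP, hzP, hypow, hqz, hzlt⟩ := st10_ppart q hq w
    have hyA : y ∈ A := (Subgroup.zpowers_le.mpr hwA) hyP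
    have hyB : y ∈ B := (Subgroup.zpowers_le.mpr hwB) hyP
    have hzA : z ∈ A := (Subgroup.zpowers_le.mpr hwA) hzP
    have hzB : z ∈ B := (Subgroup.zpowers_le.mpr hwB) hzP
    have hy := st10_main A B hG hconn hq hyA hyB hypow
    have hz := ih z hzA hzB (by have := hzlt hqw; omega)
    rw [hwyz]
    exact Subgroup.mul_mem _ hy hz
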